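/- For every closed prenex quantified Boolean formula Ψ whose matrix is a CNF without tautological clauses, the Bernays–Schönfinkel CNF f(Ψ) defined by the following translation is in the QEALM fragment and is satisfiable if and only if Ψ is true. Translation f: the signature has two constants 0 and 1; each universally quantified Boolean variable u of Ψ becomes a first-order variable u; each existentially quantified Boolean variable e becomes a predicate p_e whose arity is the number of universal variables occurring to the left of e in the prefix; each clause C of the matrix becomes the clause C' containing, for each occurrence of a positive existential literal e in C, the literal p_e(a_1,...,a_m), and for each negative existential literal ¬e, the literal ¬p_e(a_1,...,a_m), where for the i-th universal variable u of the prefix (counted left to right, with i at most the arity of the predicate) the argument a_i equals 0 if u is a literal of C, equals 1 if ¬u is a literal of C, and equals the first-order variable u otherwise. -/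

import Mathlib

/-- Terms over variables `V` and constant symbols `K`
(Bernays–Schönfinkel: the only function symbols are constants). -/
inductive Trm (V K : Type) : Type where
  | var : V → Trm V K
  | const : K → Trm V K
deriving DecidableEq

/-- A first-order literal (no equality): a polarity, a predicate symbol
and a list of argument terms. -/
structure Lit (V K P : Type) : Type where
  pol : Bool
  pred : P
  args : List (Trm V K)
deriving DecidableEq

/-- A clause is a (finite) set of literals, read disjunctively. -/
abbrev Clause (V K P : Type) := Finset (Lit V K P)

/-- A CNF is a list of clauses, read conjunctively,
with all variables universally quantified. -/
abbrev CNF (V K P : Type) := List (Clause V K P)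

variable {V K P : Type}

/-- The argument of a literal at the (1-based) position `i`. -/
def Lit.argAt (l : Lit V K P) : ℕ → Option (Trm V K)
  | 0 => none
  | i + 1 => l.args[i]?

/-- Variable `u` occurs at argument position `i` of the literal `l`. -/
def Lit.varAt (l : Lit V K P) (u : V) (i : ℕ) : Prop := l.argAt i = some (Trm.var u)

/-- Variable `u` occurs in the literal `l`. -/
def Lit.hasVar (l : Lit V K P) (u : V) : Prop := ∃ i, l.varAt u i

/-- `i` is the least argument position at which `u` occurs in `l`. -/
def Lit.firstOccAt (l : Lit V K P) (u : V) (i : ℕ) : Prop :=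
  l.varAt u i ∧ ∀ j, l.varAt u j → i ≤ j

/-- The QEALM clause condition: whenever a variable `u` occurs in several
literals of the clause, the least position at which it occurs is the same in
all these literals, and these literals agree on all argument positions up to
(and including) that one (a shared initial segment). -/
def QEALMClause (C : Clause V K P) : Prop :=
  ∀ (u : V), ∀ l₁ ∈ C, ∀ l₂ ∈ C, l₁.hasVar u → l₂.hasVar u →
    ∃ i, l₁.firstOccAt u i ∧ l₂.firstOccAt u i ∧ ∀ j ≤ i, l₁.argAt j = l₂.argAt j

/-- A CNF is in the QEALM fragment iff every clause satisfies the QEALM clause condition. -/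
def QEALM (φ : CNF V K P) : Prop := ∀ C ∈ φ, QEALMClause C

/-- A first-order structure for the signature `(K, P)` (no equality). -/
structure Model (K P : Type) : Type 1 where
  Dom : Type
  dne : Nonempty Dom
  constVal : K → Dom
  predVal : P → List Dom → Prop

/-- Value of a term in a model under a variable assignment. -/
def Trm.val (M : Model K P) (ρ : V → M.Dom) : Trm V K → M.Dom
  | .var u => ρ u
  | .const c => M.constVal c

/-- Truth of a literal in a model under a variable assignment. -/
def Lit.holds (M : Model K P) (ρ : V → M.Dom) (l : Lit V K P) : Prop :=
  if l.pol then M.predVal l.pred (l.args.map (Trm.val M ρ))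
  else ¬ M.predVal l.pred (l.args.map (Trm.val M ρ))

/-- Truth of a clause (a disjunction of literals). -/
def Clause.holds (M : Model K P) (ρ : V → M.Dom) (C : Clause V K P) : Prop :=
  ∃ l ∈ C, l.holds M ρ

/-- First-order satisfiability (without equality) of a universally quantified CNF. -/
def CNF.Satisfiable (φ : CNF V K P) : Prop :=
  ∃ M : Model K P, ∀ ρ : V → M.Dom, ∀ C ∈ φ, C.holds M ρ

/-- Applying a substitution to a term. -/
def Trm.subst (σ : V → Trm V K) : Trm V K → Trm V K
  | .var u => σ u
  | .const c => .const c

/-- Applying a substitution to a literal. -/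
def Lit.subst (σ : V → Trm V K) (l : Lit V K P) : Lit V K P :=
  ⟨l.pol, l.pred, l.args.map (Trm.subst σ)⟩

/-- Applying a substitution to a clause. -/
def Clause.subst [DecidableEq V] [DecidableEq K] [DecidableEq P]
    (σ : V → Trm V K) (C : Clause V K P) : Clause V K P :=
  C.image (Lit.subst σ)

/-- Applying a substitution to a CNF. -/
def CNF.subst [DecidableEq V] [DecidableEq K] [DecidableEq P]
    (σ : V → Trm V K) (φ : CNF V K P) : CNF V K P :=
  φ.map (Clause.subst σ)

/-- An outer variable of a clause: a variable appearing in every literal of the clause. -/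
def OuterVar (C : Clause V K P) (u : V) : Prop := ∀ l ∈ C, l.hasVar u

/-- `i` is the least position of an occurrence of `u` in any literal of `C`. -/
def LeastOccIn (C : Clause V K P) (u : V) (i : ℕ) : Prop :=
  (∃ l ∈ C, l.varAt u i) ∧ ∀ j, (∃ l ∈ C, l.varAt u j) → i ≤ j

/-- `i` is an outer position of the clause `C`. -/
def OuterPosClause (C : Clause V K P) (i : ℕ) : Prop :=
  ∃ u : V, OuterVar C u ∧ LeastOccIn C u i

/-- `i` is a neutral position of the clause `C`: some term `t`, a constant or an
outer variable of `C`, occupies the `i`-th argument of every literal of `C`. -/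
def NeutralPos (C : Clause V K P) (i : ℕ) : Prop :=
  ∃ t : Trm V K,
    ((∃ c, t = Trm.const c) ∨ (∃ u, t = Trm.var u ∧ OuterVar C u)) ∧
    ∀ l ∈ C, l.argAt i = some t

/-- `i` is an outer position of the CNF `φ`: an outer position of some clause and a
neutral position of every clause. -/
def OuterPosCNF (φ : CNF V K P) (i : ℕ) : Prop :=
  (∃ C ∈ φ, OuterPosClause C i) ∧ ∀ D ∈ φ, NeutralPos D i

/-- Variable `u` occurs at argument position `i` in some literal of `φ`. -/
def VarOccursAt (φ : CNF V K P) (u : V) (i : ℕ) : Prop :=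
  ∃ C ∈ φ, ∃ l ∈ C, l.varAt u i

/-- `σ` is the substitution that replaces every variable occurring at an argument
position `i` that is an outer position of `φ` by the constant `c i`, and leaves
all other variables unchanged. -/
def IsOuterSubst (φ : CNF V K P) (c : ℕ → K) (σ : V → Trm V K) : Prop :=
  (∀ u i, OuterPosCNF φ i → VarOccursAt φ u i → σ u = Trm.const (c i)) ∧
  (∀ u, (¬ ∃ i, OuterPosCNF φ i ∧ VarOccursAt φ u i) → σ u = Trm.var u)

/-- A clause is inseparable if it is a single literal or some variable occurs in
every literal of the clause. -/
def InsepClause (C : Clause V K P) : Prop :=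
  (∃ l, C = {l}) ∨ ∃ u : V, ∀ l ∈ C, l.hasVar u

/-- `Kc` is a component of a clause `C`: a non-empty inseparable subclause of `C`
closed under sharing variables with literals of `C`. -/
def IsComponent (Kc C : Clause V K P) : Prop :=
  Kc.Nonempty ∧ Kc ⊆ C ∧ InsepClause Kc ∧
    ∀ a ∈ Kc, ∀ b ∈ C, (∃ u : V, a.hasVar u ∧ b.hasVar u) → b ∈ Kc

/-- All variables shared between `l₁` and `l₂` occur as arguments in positions `≤ m`. -/
def SharesUpTo (l₁ l₂ : Lit V K P) (m : ℕ) : Prop :=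
  ∀ u : V, l₁.hasVar u → l₂.hasVar u →
    (∃ j ≤ m, l₁.varAt u j) ∧ (∃ j ≤ m, l₂.varAt u j)

/-- `i` is a fork index of `φ`: for some clause `C` of `φ` and literals `l₁, l₂` of
`C` (not necessarily distinct), `i` is the minimal value such that every variable
shared between `l₁` and `l₂` occurs at some argument position `≤ i`.  In particular,
`0` is a fork index if some such pair shares no variables. -/
def ForkIndex (φ : CNF V K P) (i : ℕ) : Prop :=
  ∃ C ∈ φ, ∃ l₁ ∈ C, ∃ l₂ ∈ C, IsLeast {m | SharesUpTo l₁ l₂ m} i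

/-! ### Quantified Boolean formulas (prenex, CNF matrix) -/

/-- A propositional literal: a polarity and a propositional atom (a natural number). -/
abbrev PLit := Bool × ℕ

/-- A propositional clause. -/
abbrev PClause := List PLit

/-- A propositional CNF. -/
abbrev PCNF := List PClause

/-- Truth of a propositional CNF under an assignment. -/
def PCNF.eval (α : ℕ → Bool) (m : PCNF) : Prop :=
  ∀ Cl ∈ m, ∃ l ∈ Cl, α l.2 = l.1

/-- Truth of a prenex QBF, given as a quantifier prefix (`true` = existential,
`false` = universal), an assignment to the (free) atoms and a CNF matrix:
`∀x φ := φ[⊥/x] ∧ φ[⊤/x]` and `∃x φ := φ[⊥/x] ∨ φ[⊤/x]`. -/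
def QBFTrue : List (Bool × ℕ) → (ℕ → Bool) → PCNF → Prop
  | [], α, m => PCNF.eval α m
  | (q, x) :: pre, α, m =>
      if q then ∃ b : Bool, QBFTrue pre (Function.update α x b) m
      else ∀ b : Bool, QBFTrue pre (Function.update α x b) m

/-! ### The translation `f` from QBF to Bernays–Schönfinkel -/

/-- The universal variables occurring to the left of the atom `e` in the prefix. -/
def universalsBefore (pre : List (Bool × ℕ)) (e : ℕ) : List ℕ :=
  ((pre.takeWhile (fun q => q.2 != e)).filter (fun q => !q.1)).map Prod.snd

/-- The argument contributed by the universal variable `u` for a QBF clause `C`: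
the constant `0` (encoded as `false`) if the literal `u` is in `C`, the constant
`1` (encoded as `true`) if `¬u` is in `C`, and the first-order variable `u` otherwise. -/
def argOf (C : PClause) (u : ℕ) : Trm ℕ Bool :=
  if (true, u) ∈ C then Trm.const false
  else if (false, u) ∈ C then Trm.const true
  else Trm.var u

/-- The first-order literal corresponding to an occurrence of the existential
literal `l` in the QBF clause `C`: the predicate `p_e` for `e = l.2`, with the same
polarity, whose arity is the number of universal variables left of `e` in the prefix. -/
def trLit (pre : List (Bool × ℕ)) (C : PClause) (l : PLit) : Lit ℕ Bool ℕ :=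
  ⟨l.1, l.2, (universalsBefore pre l.2).map (argOf C)⟩

/-- The translation of a QBF clause: one first-order literal for each occurrence of
an existential literal in the clause. -/
def trClause (pre : List (Bool × ℕ)) (C : PClause) : Clause ℕ Bool ℕ :=
  ((C.filter (fun l => decide ((true, l.2) ∈ pre))).map (trLit pre C)).toFinset

/-- The translation `f` of a prenex QBF into a Bernays–Schönfinkel CNF over the two
constants `0` (= `false`) and `1` (= `true`). -/
def trCNF (pre : List (Bool × ℕ)) (m : PCNF) : CNF ℕ Bool ℕ :=
  m.map (trClause pre)

/-! ### Auxiliary lemmas -/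

lemma ub_self (pre : List (Bool × ℕ)) (q : Bool) (x : ℕ) :
    universalsBefore ((q, x) :: pre) x = [] := by
  simp [universalsBefore, List.takeWhile_cons]

lemma ub_cons (pre : List (Bool × ℕ)) (q : Bool) (x e : ℕ) (h : x ≠ e) :
    universalsBefore ((q, x) :: pre) e =
      if q then universalsBefore pre e else x :: universalsBefore pre e := by
  cases q <;> simp [universalsBefore, List.takeWhile_cons, h]

lemma ub_sublist (pre : List (Bool × ℕ)) (e : ℕ) :
    List.Sublist (universalsBefore pre e) (pre.map Prod.snd) := by
  unfold universalsBefore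
  exact (List.filter_sublist.trans (List.takeWhile_sublist _)).map Prod.snd

lemma ub_nodup {pre : List (Bool × ℕ)} (h : (pre.map Prod.snd).Nodup) (e : ℕ) :
    (universalsBefore pre e).Nodup := h.sublist (ub_sublist pre e)

lemma ub_mem {pre : List (Bool × ℕ)} {e u : ℕ} (h : u ∈ universalsBefore pre e) :
    (false, u) ∈ pre := by
  simp only [universalsBefore, List.mem_map, List.mem_filter] at h
  obtain ⟨q, ⟨hq, hq1⟩, hq2⟩ := h
  have hmem : q ∈ pre := (pre.takeWhile_sublist _).mem hq
  have : q = (false, u) := by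
    obtain ⟨a, b⟩ := q; simp_all
  exact this ▸ hmem

lemma ub_prefix (pre : List (Bool × ℕ)) (e₁ e₂ : ℕ) :
    universalsBefore pre e₁ <+: universalsBefore pre e₂ ∨
      universalsBefore pre e₂ <+: universalsBefore pre e₁ := by
  induction pre with
  | nil => simp [universalsBefore]
  | cons q pre ih =>
    obtain ⟨b, x⟩ := q
    by_cases h1 : x = e₁
    · subst h1; left; simp [ub_self]
    · by_cases h2 : x = e₂
      · subst h2; right; simp [ub_self]
      · rw [ub_cons _ _ _ _ h1, ub_cons _ _ _ _ h2]
        cases b <;> simp only [if_true, if_false, Bool.false_eq_true, ite_false, ite_true]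
        · rcases ih with h | h
          · exact Or.inl (List.cons_prefix_cons.mpr ⟨rfl, h⟩)
          · exact Or.inr (List.cons_prefix_cons.mpr ⟨rfl, h⟩)
        · exact ih

lemma argOf_var {C : PClause} {w u : ℕ} (h : argOf C w = Trm.var u) : w = u := by
  unfold argOf at h
  split_ifs at h <;> simp_all

lemma varAt_trLit {pre : List (Bool × ℕ)} {Cl : PClause} {a : PLit} {u i : ℕ}
    (h : (trLit pre Cl a).varAt u i) :
    ∃ j, i = j + 1 ∧ (universalsBefore pre a.2)[j]? = some u ∧ argOf Cl u = Trm.var u := by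
  obtain (_ | j) := i
  · simp [Lit.varAt, Lit.argAt] at h
  · refine ⟨j, rfl, ?_⟩
    simp only [Lit.varAt, Lit.argAt, trLit, List.getElem?_map, Option.map_eq_some_iff] at h
    obtain ⟨w, hw, haw⟩ := h
    obtain rfl := argOf_var haw
    exact ⟨hw, haw⟩

lemma varAt_trLit' {pre : List (Bool × ℕ)} {Cl : PClause} {a : PLit} {u j : ℕ}
    (h1 : (universalsBefore pre a.2)[j]? = some u) (h2 : argOf Cl u = Trm.var u) :
    (trLit pre Cl a).varAt u (j + 1) := by
  simp [Lit.varAt, Lit.argAt, trLit, List.getElem?_map, h1, h2]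

lemma QEALM_tr (pre : List (Bool × ℕ)) (m : PCNF)
    (hnodup : (pre.map Prod.snd).Nodup) : QEALM (trCNF pre m) := by
  intro C hC
  simp only [trCNF, List.mem_map] at hC
  obtain ⟨Cl, -, rfl⟩ := hC
  intro u l₁ hl₁ l₂ hl₂ h₁ h₂
  simp only [trClause, List.mem_toFinset, List.mem_map, List.mem_filter] at hl₁ hl₂
  obtain ⟨a₁, -, rfl⟩ := hl₁
  obtain ⟨a₂, -, rfl⟩ := hl₂
  obtain ⟨i₁, hv₁⟩ := h₁
  obtain ⟨i₂, hv₂⟩ := h₂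
  obtain ⟨j₁, rfl, hg₁, hao⟩ := varAt_trLit hv₁
  obtain ⟨j₂, rfl, hg₂, -⟩ := varAt_trLit hv₂
  set L₁ := universalsBefore pre a₁.2 with hL₁
  set L₂ := universalsBefore pre a₂.2 with hL₂
  -- one of L₁, L₂ is a prefix of the other; u occurs at the same index in both
  have hsame : L₁[j₁]? = some u ∧ L₂[j₁]? = some u := by
    rcases ub_prefix pre a₁.2 a₂.2 with h | h
    · refine ⟨hg₁, ?_⟩
      obtain ⟨t, ht⟩ := h
      rw [← hL₁, ← hL₂] at ht
      rw [← ht, List.getElem?_append, if_pos (List.getElem?_eq_some_iff.mp hg₁).1]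
      exact hg₁
    · obtain ⟨t, ht⟩ := h
      rw [← hL₁, ← hL₂] at ht
      have : L₁[j₂]? = some u := by
        rw [← ht, List.getElem?_append, if_pos (List.getElem?_eq_some_iff.mp hg₂).1]; exact hg₂
      have hj : j₂ = j₁ :=
        (List.getElem?_inj (List.getElem?_eq_some_iff.mp this).1 (ub_nodup hnodup a₁.2)).mp (this.trans hg₁.symm)
      exact ⟨hg₁, hj ▸ hg₂⟩
  obtain ⟨hu₁, hu₂⟩ := hsame
  have hj₂ : j₂ = j₁ :=
    (List.getElem?_inj (List.getElem?_eq_some_iff.mp hg₂).1 (ub_nodup hnodup a₂.2)).mp (hg₂.trans hu₂.symm)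
  subst hj₂
  refine ⟨j₂ + 1, ⟨hv₁, ?_⟩, ⟨hv₂, ?_⟩, ?_⟩
  · intro k hk
    obtain ⟨j, rfl, hj, -⟩ := varAt_trLit hk
    have : j = j₂ := (List.getElem?_inj (List.getElem?_eq_some_iff.mp hj).1 (ub_nodup hnodup a₁.2)).mp
      (hj.trans hu₁.symm)
    omega
  · intro k hk
    obtain ⟨j, rfl, hj, -⟩ := varAt_trLit hk
    have : j = j₂ := (List.getElem?_inj (List.getElem?_eq_some_iff.mp hj).1 (ub_nodup hnodup a₂.2)).mp
      (hj.trans hu₂.symm)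
    omega
  · intro j hj
    obtain (_ | k) := j
    · simp [Lit.argAt]
    · have hk : k ≤ j₂ := by omega
      simp only [Lit.argAt, trLit, List.getElem?_map]
      have hlen₁ : k < L₁.length := lt_of_le_of_lt hk (List.getElem?_eq_some_iff.mp hu₁).1
      have hlen₂ : k < L₂.length := lt_of_le_of_lt hk (List.getElem?_eq_some_iff.mp hu₂).1
      have : L₁[k]? = L₂[k]? := by
        rcases ub_prefix pre a₁.2 a₂.2 with h | h <;>
          obtain ⟨t, ht⟩ := h <;> rw [← hL₁, ← hL₂] at ht
        · rw [← ht, List.getElem?_append, if_pos hlen₁]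
        · rw [← ht, List.getElem?_append, if_pos hlen₂]
      rw [← hL₁, ← hL₂, this]

/-! ### Semantics: Skolem-function characterization of QBF truth -/

/-- The combined assignment: existentials of `pre` get their Skolem value under `s`,
universals get `β`, unquantified atoms get `α`. -/
def asgn (pre : List (Bool × ℕ)) (α : ℕ → Bool) (s : ℕ → List Bool → Bool) (β : ℕ → Bool)
    (v : ℕ) : Bool :=
  if (true, v) ∈ pre then s v ((universalsBefore pre v).map β)
  else if (false, v) ∈ pre then β v
  else α v

lemma not_mem_pair {pre : List (Bool × ℕ)} {x : ℕ} (h : x ∉ pre.map Prod.snd) (b : Bool) :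
    (b, x) ∉ pre := fun hm => h (List.mem_map.mpr ⟨_, hm, rfl⟩)

lemma not_both {pre : List (Bool × ℕ)} (h : (pre.map Prod.snd).Nodup) {v : ℕ}
    (h1 : (true, v) ∈ pre) (h2 : (false, v) ∈ pre) : False := by
  have := List.inj_on_of_nodup_map h h1 h2 rfl
  simp at this

lemma asgn_congr_s {pre : List (Bool × ℕ)} {α β : ℕ → Bool} {s s' : ℕ → List Bool → Bool}
    (h : ∀ v, (true, v) ∈ pre → s v = s' v) : asgn pre α s β = asgn pre α s' β := by
  funext v
  unfold asgn
  split_ifs with h1 h2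
  · rw [h v h1]
  · rfl
  · rfl

lemma asgn_cons_true {pre : List (Bool × ℕ)} {x : ℕ} {α β : ℕ → Bool}
    {s : ℕ → List Bool → Bool} (hx : x ∉ pre.map Prod.snd) :
    asgn ((true, x) :: pre) α s β = asgn pre (Function.update α x (s x [])) s β := by
  funext v
  unfold asgn
  by_cases hvx : v = x
  · subst hvx
    simp [not_mem_pair hx, ub_self]
  · have hne : ((true : Bool), v) ≠ (true, x) := by simp [hvx]
    have hne2 : ((false : Bool), v) ≠ (true, x) := by simp
    rw [ub_cons pre true x v (Ne.symm hvx)]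
    simp only [List.mem_cons, hne, false_or, hne2, Function.update_of_ne hvx, if_true]

lemma asgn_cons_false {pre : List (Bool × ℕ)} {x : ℕ} {α β : ℕ → Bool}
    {s : ℕ → List Bool → Bool} (hx : x ∉ pre.map Prod.snd) :
    asgn ((false, x) :: pre) α s β =
      asgn pre (Function.update α x (β x)) (fun v L => s v (β x :: L)) β := by
  funext v
  unfold asgn
  by_cases hvx : v = x
  · subst hvx
    simp [not_mem_pair hx]
  · have hne : ((true : Bool), v) ≠ (false, x) := by simp
    have hne2 : ((false : Bool), v) ≠ (false, x) := by simp [hvx]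
    rw [ub_cons pre false x v (Ne.symm hvx)]
    simp only [List.mem_cons, hne, false_or, hne2, Function.update_of_ne hvx, if_false,
      Bool.false_eq_true, List.map_cons]

lemma asgn_update_β {pre : List (Bool × ℕ)} {x : ℕ} {α β : ℕ → Bool} {b : Bool}
    {s : ℕ → List Bool → Bool} (hx : x ∉ pre.map Prod.snd) :
    asgn pre α s (Function.update β x b) = asgn pre α s β := by
  funext v
  unfold asgn
  split_ifs with h1 h2
  · congr 1
    refine List.map_congr_left fun u hu => ?_
    have : u ≠ x := fun h => hx (h ▸ List.mem_map.mpr ⟨_, ub_mem hu, rfl⟩)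
    exact Function.update_of_ne this _ _
  · have : v ≠ x := fun h => hx (h ▸ List.mem_map.mpr ⟨_, h2, rfl⟩)
    exact Function.update_of_ne this _ _
  · rfl

lemma lemA (pre : List (Bool × ℕ)) (hnd : (pre.map Prod.snd).Nodup) (α : ℕ → Bool) (m : PCNF) :
    QBFTrue pre α m ↔
      ∃ s : ℕ → List Bool → Bool, ∀ β : ℕ → Bool, PCNF.eval (asgn pre α s β) m := by
  induction pre generalizing α with
  | nil =>
    have : ∀ s β, asgn [] α s β = α := by intro s β; funext v; simp [asgn]
    simp only [QBFTrue]
    constructor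
    · exact fun h => ⟨fun _ _ => false, fun β => by rw [this]; exact h⟩
    · rintro ⟨s, hs⟩
      have h2 := hs (fun _ => false)
      rwa [this _ _] at h2
  | cons q pre ih =>
    obtain ⟨b, x⟩ := q
    simp only [List.map_cons, List.nodup_cons] at hnd
    obtain ⟨hx, hnd'⟩ := hnd
    cases b
    · -- universal
      simp only [QBFTrue, if_false, Bool.false_eq_true]
      constructor
      · intro h
        choose S hS using fun c => (ih hnd' (Function.update α x c)).mp (h c)
        refine ⟨fun v L => match L with | [] => false | c :: L' => S c v L', fun β => ?_⟩
        rw [asgn_cons_false hx]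
        exact hS (β x) β
      · rintro ⟨s, hs⟩ c
        refine (ih hnd' (Function.update α x c)).mpr ⟨fun v L => s v (c :: L), fun β => ?_⟩
        have h := hs (Function.update β x c)
        rw [asgn_cons_false hx, Function.update_self, asgn_update_β hx] at h
        exact h
    · -- existential
      simp only [QBFTrue, if_true]
      constructor
      · rintro ⟨c, hc⟩
        obtain ⟨s, hs⟩ := (ih hnd' (Function.update α x c)).mp hc
        refine ⟨Function.update s x (fun _ => c), fun β => ?_⟩
        rw [asgn_cons_true hx, Function.update_self,
          asgn_congr_s (s' := s) fun v hv => Function.update_of_ne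
            (by rintro rfl; exact hx (List.mem_map.mpr ⟨_, hv, rfl⟩)) _ _]
        exact hs β
      · rintro ⟨s, hs⟩
        refine ⟨s x [], (ih hnd' _).mpr ⟨s, fun β => ?_⟩⟩
        rw [← asgn_cons_true hx]
        exact hs β

/-! ### Satisfiability of the translation vs. existence of Skolem functions -/

lemma sat_iff (pre : List (Bool × ℕ)) (m : PCNF)
    (hclosed : ∀ Cl ∈ m, ∀ l ∈ Cl, l.2 ∈ pre.map Prod.snd)
    (hnodup : (pre.map Prod.snd).Nodup)
    (hnotaut : ∀ Cl ∈ m, ¬ ∃ v, (true, v) ∈ Cl ∧ (false, v) ∈ Cl) :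
    CNF.Satisfiable (trCNF pre m) ↔
      ∃ s : ℕ → List Bool → Bool, ∀ β : ℕ → Bool,
        PCNF.eval (asgn pre (fun _ => false) s β) m := by
  constructor
  · rintro ⟨M, hM⟩
    classical
    refine ⟨fun e L => decide (M.predVal e (L.map M.constVal)), fun β => ?_⟩
    intro Cl hCl
    by_cases hcase : ∃ l ∈ Cl, (false, l.2) ∈ pre ∧ β l.2 = l.1
    · obtain ⟨l, hl, hu, hb⟩ := hcase
      refine ⟨l, hl, ?_⟩
      unfold asgn
      rw [if_neg (fun h => not_both hnodup h hu), if_pos hu]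
      exact hb
    · push_neg at hcase
      set ρ : ℕ → M.Dom := fun u => M.constVal (β u) with hρ
      obtain ⟨tl, htl, hholds⟩ :=
        hM ρ (trClause pre Cl) (List.mem_map.mpr ⟨Cl, hCl, rfl⟩)
      simp only [trClause, List.mem_toFinset, List.mem_map, List.mem_filter,
        decide_eq_true_eq] at htl
      obtain ⟨l, ⟨hl, hex⟩, rfl⟩ := htl
      refine ⟨l, hl, ?_⟩
      have hargs : ((universalsBefore pre l.2).map (argOf Cl)).map (Trm.val M ρ) =
          ((universalsBefore pre l.2).map β).map M.constVal := by
        rw [List.map_map, List.map_map]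
        refine List.map_congr_left fun u hu => ?_
        have hup : (false, u) ∈ pre := ub_mem hu
        simp only [Function.comp]
        unfold argOf
        split_ifs with h1 h2
        · have : β u = false := by
            have := hcase (true, u) h1 hup
            simpa using this
          rw [this]; rfl
        · have : β u = true := by
            have := hcase (false, u) h2 hup
            simpa using this
          rw [this]; rfl
        · rfl
      unfold asgn
      rw [if_pos hex]
      simp only [Lit.holds, trLit] at hholds
      rw [hargs] at hholds
      cases hl1 : l.1
      · simp only [hl1] at hholds
        simp only [Bool.false_eq_true, if_false] at hholds
        simpa using hholds
      · simp only [hl1] at hholds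
        simp only [if_true] at hholds
        simpa using hholds
  · rintro ⟨s, hs⟩
    refine ⟨⟨Bool, ⟨false⟩, id, fun e ds => s e ds = true⟩, ?_⟩
    intro ρ C hC
    simp only [trCNF, List.mem_map] at hC
    obtain ⟨Cl, hCl, rfl⟩ := hC
    set β : ℕ → Bool := fun u =>
      if (true, u) ∈ Cl then false else if (false, u) ∈ Cl then true else ρ u with hβ
    obtain ⟨l, hl, hval⟩ := hs β Cl hCl
    -- l.2 is existential
    have hex : (true, l.2) ∈ pre := by
      by_contra hne
      obtain ⟨p, hp, hp2⟩ := List.mem_map.mp (hclosed Cl hCl l hl)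
      have hpu : (false, l.2) ∈ pre := by
        obtain ⟨pb, pv⟩ := p
        cases pb
        · exact hp2 ▸ hp
        · exact absurd (hp2 ▸ hp) hne
      rw [asgn, if_neg hne, if_pos hpu] at hval
      have hβl : β l.2 = l.1 := hval
      cases hl1 : l.1
      · have h1 : ((false : Bool), l.2) ∈ Cl := by
          have : l = (false, l.2) := Prod.ext hl1 rfl
          exact this ▸ hl
        have h2 : ((true : Bool), l.2) ∉ Cl := fun h => hnotaut Cl hCl ⟨l.2, h, h1⟩
        rw [hβ, hl1] at hβl
        simp [h1, h2] at hβl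
      · have h1 : ((true : Bool), l.2) ∈ Cl := by
          have : l = (true, l.2) := Prod.ext hl1 rfl
          exact this ▸ hl
        rw [hβ, hl1] at hβl
        simp [h1] at hβl
    refine ⟨trLit pre Cl l, ?_, ?_⟩
    · simp only [trClause, List.mem_toFinset, List.mem_map, List.mem_filter, decide_eq_true_eq]
      exact ⟨l, ⟨hl, hex⟩, rfl⟩
    · rw [asgn, if_pos hex] at hval
      have hargs : ((universalsBefore pre l.2).map (argOf Cl)).map
          (Trm.val ⟨Bool, ⟨false⟩, id, fun e ds => s e ds = true⟩ ρ) =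
          (universalsBefore pre l.2).map β := by
        rw [List.map_map]
        refine List.map_congr_left fun u _ => ?_
        simp only [Function.comp, hβ]
        unfold argOf
        split_ifs <;> rfl
      simp only [Lit.holds, trLit, hargs]
      cases hl1 : l.1
      · rw [hl1] at hval
        simp only [Bool.false_eq_true, if_false]
        simp [hval]
      · rw [hl1] at hval
        simp only [if_true]
        exact hval

/-- For every closed prenex QBF (each atom quantified exactly
once, every atom of the matrix quantified) whose CNF matrix has no tautological
clauses, the translated Bernays–Schönfinkel CNF is in the QEALM fragment and is
satisfiable iff the QBF is true. -/
theorem statement_7 (pre : List (Bool × ℕ)) (m : PCNF)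
    (hclosed : ∀ Cl ∈ m, ∀ l ∈ Cl, l.2 ∈ pre.map Prod.snd)
    (hnodup : (pre.map Prod.snd).Nodup)
    (hnotaut : ∀ Cl ∈ m, ¬ ∃ v, (true, v) ∈ Cl ∧ (false, v) ∈ Cl) :
    QEALM (trCNF pre m) ∧
      (CNF.Satisfiable (trCNF pre m) ↔ QBFTrue pre (fun _ => false) m) := by
  exact ⟨QEALM_tr pre m hnodup,
    (sat_iff pre m hclosed hnodup hnotaut).trans (lemA pre hnodup (fun _ => false) m).symm⟩
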